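/- Let 𝓟 = (P₀, P₁, m₁, m₂, m₃, θ) be a pre-Lie-Rinehart 2-algebra over A. Define l₂(X⁰,Y⁰) = m₂(X⁰,Y⁰) − m₂(Y⁰,X⁰), l₂(X⁰,Y¹) = −l₂(Y¹,X⁰) = m₂(X⁰,Y¹) − m₂(Y¹,X⁰), and l₃(X⁰,Y⁰,Z⁰) = m₃(X⁰,Y⁰,Z⁰) + m₃(Z⁰,X⁰,Y⁰) + m₃(Y⁰,Z⁰,X⁰). Then (P₀, P₁, l₁ = m₁, l₂, l₃, θ) is a Lie-Rinehart 2-algebra over A. -/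

import Mathlib

/-- A pre-Lie-Rinehart 2-algebra over `A`: a 2-term complex `m1 : P1 → P0` of
`A`-modules, structure maps `m200 : P0×P0 → P0`, `m201 : P0×P1 → P1`,
`m210 : P1×P0 → P1` (the components of `m₂`), `m3 : P0×P0×P0 → P1` (skew in its
first two arguments), and an `A`-linear anchor `θ : P0 → Der(A)`, satisfying the
pre-Lie 2-algebra axioms (a)-(f) together with the Rinehart compatibility
conditions (i)-(v). -/
def IsPreLieRinehart2 (K : Type*) {A P0 P1 : Type*} [Field K] [CommRing A]
    [Algebra K A]
    [AddCommGroup P0] [Module K P0] [Module A P0] [IsScalarTower K A P0]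
    [AddCommGroup P1] [Module K P1] [Module A P1] [IsScalarTower K A P1]
    (m1 : P1 → P0) (m200 : P0 → P0 → P0) (m201 : P0 → P1 → P1)
    (m210 : P1 → P0 → P1) (m3 : P0 → P0 → P0 → P1)
    (θ : P0 → Derivation K A A) : Prop :=
  -- m1 is A-linear
  (∀ u v : P1, m1 (u + v) = m1 u + m1 v) ∧
  (∀ (a : A) (u : P1), m1 (a • u) = a • m1 u) ∧
  -- biadditivity of the components of m₂
  (∀ X Y Z : P0, m200 (X + Y) Z = m200 X Z + m200 Y Z) ∧
  (∀ X Y Z : P0, m200 X (Y + Z) = m200 X Y + m200 X Z) ∧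
  (∀ (X Y : P0) (u : P1), m201 (X + Y) u = m201 X u + m201 Y u) ∧
  (∀ (X : P0) (u v : P1), m201 X (u + v) = m201 X u + m201 X v) ∧
  (∀ (u v : P1) (X : P0), m210 (u + v) X = m210 u X + m210 v X) ∧
  (∀ (u : P1) (X Y : P0), m210 u (X + Y) = m210 u X + m210 u Y) ∧
  -- Rinehart conditions (i) and (ii) for m₂
  (∀ (a : A) (X Y : P0), m200 X (a • Y) = a • m200 X Y + θ X a • Y) ∧
  (∀ (a : A) (X Y : P0), m200 (a • X) Y = a • m200 X Y) ∧
  (∀ (a : A) (X : P0) (u : P1), m201 X (a • u) = a • m201 X u + θ X a • u) ∧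
  (∀ (a : A) (X : P0) (u : P1), m201 (a • X) u = a • m201 X u) ∧
  (∀ (a : A) (u : P1) (X : P0), m210 u (a • X) = a • m210 u X) ∧
  (∀ (a : A) (u : P1) (X : P0), m210 (a • u) X = a • m210 u X) ∧
  -- m3 is A-trilinear and skew-symmetric in its first two arguments
  (∀ W X Y Z : P0, m3 (W + X) Y Z = m3 W Y Z + m3 X Y Z) ∧
  (∀ W X Y Z : P0, m3 W (X + Y) Z = m3 W X Z + m3 W Y Z) ∧
  (∀ W X Y Z : P0, m3 W X (Y + Z) = m3 W X Y + m3 W X Z) ∧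
  (∀ (a : A) (X Y Z : P0), m3 (a • X) Y Z = a • m3 X Y Z) ∧
  (∀ (a : A) (X Y Z : P0), m3 X (a • Y) Z = a • m3 X Y Z) ∧
  (∀ (a : A) (X Y Z : P0), m3 X Y (a • Z) = a • m3 X Y Z) ∧
  (∀ X Y Z : P0, m3 X Y Z = - m3 Y X Z) ∧
  -- axiom (a): m1 m2(x, m) = m2(x, m1 m)
  (∀ (X : P0) (u : P1), m1 (m201 X u) = m200 X (m1 u)) ∧
  -- axiom (b): m1 m2(m, x) = m2(m1 m, x)
  (∀ (u : P1) (X : P0), m1 (m210 u X) = m200 (m1 u) X) ∧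
  -- axiom (c): m2(m1 m, n) = m2(m, m1 n)
  (∀ u v : P1, m201 (m1 u) v = m210 u (m1 v)) ∧
  -- axiom (e₁)
  (∀ X Y Z : P0, m1 (m3 X Y Z)
      = m200 X (m200 Y Z) - m200 (m200 X Y) Z
        - m200 Y (m200 X Z) + m200 (m200 Y X) Z) ∧
  -- axiom (e₂)
  (∀ (X Y : P0) (u : P1), m3 X Y (m1 u)
      = m201 X (m201 Y u) - m201 (m200 X Y) u
        - m201 Y (m201 X u) + m201 (m200 Y X) u) ∧
  -- axiom (e₃)
  (∀ (u : P1) (X Y : P0), m3 (m1 u) X Y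
      = m210 u (m200 X Y) - m210 (m210 u X) Y
        - m201 X (m210 u Y) + m210 (m201 X u) Y) ∧
  -- axiom (f)
  (∀ W X Y Z : P0,
      m201 W (m3 X Y Z) - m201 X (m3 W Y Z) + m201 Y (m3 W X Z)
        + m210 (m3 X Y W) Z - m210 (m3 W Y X) Z + m210 (m3 W X Y) Z
        - m3 X Y (m200 W Z) + m3 W Y (m200 X Z) - m3 W X (m200 Y Z)
        - m3 (m200 W X - m200 X W) Y Z + m3 (m200 W Y - m200 Y W) X Z
        - m3 (m200 X Y - m200 Y X) W Z = 0) ∧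
  -- the anchor θ is A-linear and satisfies (iv), (v)
  (∀ X Y : P0, θ (X + Y) = θ X + θ Y) ∧
  (∀ (a : A) (X : P0), θ (a • X) = a • θ X) ∧
  (∀ X Y : P0, θ (m200 X Y - m200 Y X) = ⁅θ X, θ Y⁆) ∧
  (∀ u : P1, θ (m1 u) = 0)

/-- A Lie-Rinehart 2-algebra over `A`: a 2-term complex `l1 : P1 → P0` of
`A`-modules, a skew-symmetric bracket with components `l200 : P0×P0 → P0` and
`l201 : P0×P1 → P1`, a totally skew-symmetric `l3 : P0×P0×P0 → P1`, and an
`A`-linear anchor `θ : P0 → Der(A)`, satisfying the Lie 2-algebra axioms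
(a)-(d) together with the Rinehart compatibility conditions. -/
def IsLieRinehart2 (K : Type*) {A P0 P1 : Type*} [Field K] [CommRing A]
    [Algebra K A]
    [AddCommGroup P0] [Module K P0] [Module A P0] [IsScalarTower K A P0]
    [AddCommGroup P1] [Module K P1] [Module A P1] [IsScalarTower K A P1]
    (l1 : P1 → P0) (l200 : P0 → P0 → P0) (l201 : P0 → P1 → P1)
    (l3 : P0 → P0 → P0 → P1)
    (θ : P0 → Derivation K A A) : Prop :=
  -- l1 is A-linear
  (∀ u v : P1, l1 (u + v) = l1 u + l1 v) ∧
  (∀ (a : A) (u : P1), l1 (a • u) = a • l1 u) ∧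
  -- biadditivity and skew-symmetry of l₂
  (∀ X Y Z : P0, l200 (X + Y) Z = l200 X Z + l200 Y Z) ∧
  (∀ X Y Z : P0, l200 X (Y + Z) = l200 X Y + l200 X Z) ∧
  (∀ X Y : P0, l200 X Y = - l200 Y X) ∧
  (∀ (X Y : P0) (u : P1), l201 (X + Y) u = l201 X u + l201 Y u) ∧
  (∀ (X : P0) (u v : P1), l201 X (u + v) = l201 X u + l201 X v) ∧
  -- Rinehart conditions for l₂
  (∀ (a : A) (X Y : P0), l200 X (a • Y) = a • l200 X Y + θ X a • Y) ∧
  (∀ (a : A) (X : P0) (u : P1), l201 X (a • u) = a • l201 X u + θ X a • u) ∧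
  (∀ (a : A) (X : P0) (u : P1), l201 (a • X) u = a • l201 X u) ∧
  -- l3 is A-trilinear and totally skew-symmetric
  (∀ W X Y Z : P0, l3 (W + X) Y Z = l3 W Y Z + l3 X Y Z) ∧
  (∀ W X Y Z : P0, l3 W (X + Y) Z = l3 W X Z + l3 W Y Z) ∧
  (∀ W X Y Z : P0, l3 W X (Y + Z) = l3 W X Y + l3 W X Z) ∧
  (∀ (a : A) (X Y Z : P0), l3 (a • X) Y Z = a • l3 X Y Z) ∧
  (∀ (a : A) (X Y Z : P0), l3 X (a • Y) Z = a • l3 X Y Z) ∧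
  (∀ (a : A) (X Y Z : P0), l3 X Y (a • Z) = a • l3 X Y Z) ∧
  (∀ X Y Z : P0, l3 X Y Z = - l3 Y X Z) ∧
  (∀ X Y Z : P0, l3 X Y Z = - l3 X Z Y) ∧
  -- axiom (a)
  (∀ (X : P0) (u : P1), l1 (l201 X u) = l200 X (l1 u)) ∧
  (∀ u v : P1, l201 (l1 u) v = - l201 (l1 v) u) ∧
  -- axiom (b)
  (∀ X Y Z : P0, l1 (l3 X Y Z)
      = l200 X (l200 Y Z) + l200 Z (l200 X Y) + l200 Y (l200 Z X)) ∧
  -- axiom (c)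
  (∀ (X Y : P0) (u : P1), l3 X Y (l1 u)
      = l201 X (l201 Y u) - l201 (l200 X Y) u - l201 Y (l201 X u)) ∧
  -- axiom (d): the Jacobiator identity
  (∀ X1 X2 X3 X4 : P0,
      l201 X1 (l3 X2 X3 X4) - l201 X2 (l3 X1 X3 X4) + l201 X3 (l3 X1 X2 X4)
        - l201 X4 (l3 X1 X2 X3)
        - l3 (l200 X1 X2) X3 X4 + l3 (l200 X1 X3) X2 X4 - l3 (l200 X1 X4) X2 X3
        - l3 (l200 X2 X3) X1 X4 + l3 (l200 X2 X4) X1 X3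
        - l3 (l200 X3 X4) X1 X2 = 0) ∧
  -- the anchor θ is A-linear and compatible
  (∀ X Y : P0, θ (X + Y) = θ X + θ Y) ∧
  (∀ (a : A) (X : P0), θ (a • X) = a • θ X) ∧
  (∀ X Y : P0, θ (l200 X Y) = ⁅θ X, θ Y⁆) ∧
  (∀ u : P1, θ (l1 u) = 0)

/-- the skew-symmetrization of a pre-Lie-Rinehart 2-algebra is a
Lie-Rinehart 2-algebra: with `l₂(X⁰,Y⁰) = m₂(X⁰,Y⁰) − m₂(Y⁰,X⁰)`,
`l₂(X⁰,Y¹) = m₂(X⁰,Y¹) − m₂(Y¹,X⁰)` and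
`l₃(X,Y,Z) = m₃(X,Y,Z) + m₃(Z,X,Y) + m₃(Y,Z,X)`, the data
`(P₀, P₁, l₁ = m₁, l₂, l₃, θ)` is a Lie-Rinehart 2-algebra over `A`. -/
theorem preLieRinehart2_subAdjacent {K A P0 P1 : Type*} [Field K] [CommRing A]
    [Algebra K A]
    [AddCommGroup P0] [Module K P0] [Module A P0] [IsScalarTower K A P0]
    [AddCommGroup P1] [Module K P1] [Module A P1] [IsScalarTower K A P1]
    (m1 : P1 → P0) (m200 : P0 → P0 → P0) (m201 : P0 → P1 → P1)
    (m210 : P1 → P0 → P1) (m3 : P0 → P0 → P0 → P1)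
    (θ : P0 → Derivation K A A)
    (h : IsPreLieRinehart2 K m1 m200 m201 m210 m3 θ) :
    IsLieRinehart2 K m1
      (fun X Y => m200 X Y - m200 Y X)
      (fun X u => m201 X u - m210 u X)
      (fun X Y Z => m3 X Y Z + m3 Z X Y + m3 Y Z X)
      θ := by
  obtain ⟨hm1a, hm1s, h3, h4, h5, h6, h7, h8, h9, h10, h11, h12, h13, h14,
      h15, h16, h17, h18, h19, h20, h21, h22, h23, h24, h25, h26, h27, h28,
      h29, h30, h31, h32⟩ := h
  have m1s : ∀ u v : P1, m1 (u - v) = m1 u - m1 v :=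
    fun u v => (AddMonoidHom.mk' m1 hm1a).map_sub u v
  have s200l : ∀ X Y Z : P0, m200 (X - Y) Z = m200 X Z - m200 Y Z :=
    fun X Y Z => (AddMonoidHom.mk' (fun W => m200 W Z) fun a b => h3 a b Z).map_sub X Y
  have s200r : ∀ X Y Z : P0, m200 X (Y - Z) = m200 X Y - m200 X Z :=
    fun X Y Z => (AddMonoidHom.mk' (m200 X) (h4 X)).map_sub Y Z
  have s201l : ∀ (X Y : P0) (u : P1), m201 (X - Y) u = m201 X u - m201 Y u :=
    fun X Y u => (AddMonoidHom.mk' (fun W => m201 W u) fun a b => h5 a b u).map_sub X Y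
  have s201r : ∀ (X : P0) (u v : P1), m201 X (u - v) = m201 X u - m201 X v :=
    fun X u v => (AddMonoidHom.mk' (m201 X) (h6 X)).map_sub u v
  have s210l : ∀ (u v : P1) (X : P0), m210 (u - v) X = m210 u X - m210 v X :=
    fun u v X => (AddMonoidHom.mk' (fun w => m210 w X) fun a b => h7 a b X).map_sub u v
  have s210r : ∀ (u : P1) (X Y : P0), m210 u (X - Y) = m210 u X - m210 u Y :=
    fun u X Y => (AddMonoidHom.mk' (m210 u) (h8 u)).map_sub X Y
  have s3a : ∀ W X Y Z : P0, m3 (W - X) Y Z = m3 W Y Z - m3 X Y Z :=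
    fun W X Y Z => (AddMonoidHom.mk' (fun V => m3 V Y Z) fun a b => h15 a b Y Z).map_sub W X
  have s3b : ∀ W X Y Z : P0, m3 W (X - Y) Z = m3 W X Z - m3 W Y Z :=
    fun W X Y Z => (AddMonoidHom.mk' (fun V => m3 W V Z) fun a b => h16 W a b Z).map_sub X Y
  have s3c : ∀ W X Y Z : P0, m3 W X (Y - Z) = m3 W X Y - m3 W X Z :=
    fun W X Y Z => (AddMonoidHom.mk' (m3 W X) (h17 W X)).map_sub Y Z
  have n201r : ∀ (X : P0) (u : P1), m201 X (-u) = -m201 X u :=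
    fun X u => (AddMonoidHom.mk' (m201 X) (h6 X)).map_neg u
  have n210l : ∀ (u : P1) (X : P0), m210 (-u) X = -m210 u X :=
    fun u X => (AddMonoidHom.mk' (fun w => m210 w X) fun a b => h7 a b X).map_neg u
  refine ⟨hm1a, hm1s, ?_, ?_, ?_, ?_, ?_, ?_, ?_, ?_, ?_, ?_, ?_, ?_, ?_, ?_,
    ?_, ?_, ?_, ?_, ?_, ?_, ?_, h29, h30, ?_, ?_⟩
  · intro X Y Z; simp only [h3, h4]; abel
  · intro X Y Z; simp only [h3, h4]; abel
  · intro X Y; exact (neg_sub _ _).symm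
  · intro X Y u; simp only [h5, h8]; abel
  · intro X u v; simp only [h6, h7]; abel
  · intro a X Y; simp only [h9, h10, smul_sub]; abel
  · intro a X u; simp only [h11, h14, smul_sub]; abel
  · intro a X u; simp only [h12, h13, smul_sub]
  · intro W X Y Z; simp only [h15, h16, h17]; abel
  · intro W X Y Z; simp only [h15, h16, h17]; abel
  · intro W X Y Z; simp only [h15, h16, h17]; abel
  · intro a X Y Z; simp only [h18, h19, h20, smul_add]
  · intro a X Y Z; simp only [h18, h19, h20, smul_add]
  · intro a X Y Z; simp only [h18, h19, h20, smul_add]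
  · intro X Y Z; simp only [h21 Y X Z, h21 Z Y X, h21 X Z Y]; abel
  · intro X Y Z; simp only [h21 X Z Y, h21 Y X Z, h21 Z Y X]; abel
  · intro X u; simp only [m1s, h22, h23]
  · intro u v; simp only [h24]; abel
  · intro X Y Z
    simp only [hm1a, h25, s200l, s200r]; abel
  · intro X Y u
    simp only [h21 Y (m1 u) X, h26, h27, s201l, s201r, s210l, s210r]; abel
  · intro X1 X2 X3 X4
    have F1 := h28 X1 X2 X3 X4
    have F2 := h28 X1 X2 X4 X3
    have F3 := h28 X1 X3 X4 X2
    have F4 := h28 X2 X3 X4 X1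
    simp only [h6, h7, s3a, s3b, s3c] at F1 F2 F3 F4 ⊢
    simp only [h21 X3 X1 X2, h21 X4 X1 X2, h21 X4 X1 X3, h21 X4 X2 X3, h21 (m200 X1 X2) X3 X4, h21 (m200 X1 X2) X4 X3, h21 (m200 X1 X3) X2 X4, h21 (m200 X1 X3) X4 X2, h21 (m200 X1 X4) X2 X3, h21 (m200 X1 X4) X3 X2, h21 (m200 X2 X1) X3 X4, h21 (m200 X2 X1) X4 X3, h21 (m200 X2 X3) X1 X4, h21 (m200 X2 X3) X4 X1, h21 (m200 X2 X4) X1 X3, h21 (m200 X2 X4) X3 X1, h21 (m200 X3 X1) X2 X4, h21 (m200 X3 X1) X4 X2, h21 (m200 X3 X2) X1 X4, h21 (m200 X3 X2) X4 X1, h21 (m200 X3 X4) X1 X2, h21 (m200 X3 X4) X2 X1, h21 (m200 X4 X1) X2 X3, h21 (m200 X4 X1) X3 X2, h21 (m200 X4 X2) X1 X3, h21 (m200 X4 X2) X3 X1, h21 (m200 X4 X3) X1 X2, h21 (m200 X4 X3) X2 X1] at F1 F2 F3 F4 ⊢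
    simp only [n201r, n210l] at F1 F2 F3 F4 ⊢
    linear_combination (norm := abel) F1 - F2 + F3 - F4
  · exact h31
  · exact h32
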